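/- Fix eps ∈ (0,1/50]. There exists a universal constant C̄ > 0 such that for all C_- ≥ C̄ and all A > 0 there exists S0 > 0 (depending on A, C_-, eps) with the following property. Let s1 > s0 ≥ S0 and let b, b̃ : [s0,s1] → (0,∞) with b̃ differentiable, b̃' = -b·b̃, (1-eps)/s ≤ b(s) ≤ (1+eps)/s and (1-2·eps)/s ≤ b̃(s) ≤ (1+2·eps)/s for all s ∈ [s0,s1]. Then the function W_+(s,ψ) := (6ψ)^{4/3}/4 + A·ψ^{10/3}·b̃(s)² satisfies ∂_sW_+ - 2b·W_+ + (3b/2)·ψ·∂_ψW_+ - √(W_+)·∂_ψ²W_+ + 2 ≥ 0 at every point (s,ψ) with s ∈ [s0,s1] and ψ ≥ C_-·b̃(s)^{-3/4}. -/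

import Mathlib

open Set MeasureTheory Filter
open scoped Topology

/-- The supersolution `W_+(s,ψ) = (6ψ)^{4/3}/4 + A·ψ^{10/3}·b̃(s)²`. -/
noncomputable def Wplus (A : ℝ) (btil : ℝ → ℝ) (s psi : ℝ) : ℝ :=
  (6 * psi) ^ ((4:ℝ)/3) / 4 + A * psi ^ ((10:ℝ)/3) * btil s ^ 2

set_option maxHeartbeats 1000000

private lemma third_pow (x : ℝ) (hx : 0 ≤ x) (n : ℕ) :
    (x ^ ((1:ℝ)/3)) ^ n = x ^ ((n:ℝ)/3) := by
  rw [← Real.rpow_natCast (x ^ ((1:ℝ)/3)) n, ← Real.rpow_mul hx,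
    show (1:ℝ)/3 * (n:ℝ) = (n:ℝ)/3 by ring]

private lemma hasDerivAt_W1 (A c x : ℝ) (hx : 0 < x) :
    HasDerivAt (fun y : ℝ => (6*y)^((4:ℝ)/3)/4 + A * y^((10:ℝ)/3) * c)
      (2*(6*x)^((1:ℝ)/3) + 10/3 * A * x^((7:ℝ)/3) * c) x := by
  have h6 : HasDerivAt (fun y : ℝ => 6*y) 6 x := by
    simpa using (hasDerivAt_id x).const_mul (6:ℝ)
  have h1 : HasDerivAt (fun y : ℝ => (6*y)^((4:ℝ)/3)) (8*(6*x)^((1:ℝ)/3)) x := by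
    have := h6.rpow_const (p := (4:ℝ)/3) (Or.inl (by positivity))
    convert this using 1
    norm_num
  have h2 : HasDerivAt (fun y : ℝ => y ^ ((10:ℝ)/3)) ((10:ℝ)/3 * x^((7:ℝ)/3)) x := by
    have := Real.hasDerivAt_rpow_const (x := x) (p := (10:ℝ)/3) (Or.inl hx.ne')
    convert this using 2
    norm_num
  have h := (h1.div_const 4).add ((h2.const_mul A).mul_const c)
  refine h.congr_deriv ?_
  ring

private lemma hasDerivAt_W2 (A c x : ℝ) (hx : 0 < x) :
    HasDerivAt (fun y : ℝ => 2*(6*y)^((1:ℝ)/3) + 10/3 * A * y^((7:ℝ)/3) * c)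
      (4*(6*x)^(-(2:ℝ)/3) + 70/9 * A * x^((4:ℝ)/3) * c) x := by
  have h6 : HasDerivAt (fun y : ℝ => 6*y) 6 x := by
    simpa using (hasDerivAt_id x).const_mul (6:ℝ)
  have h1 : HasDerivAt (fun y : ℝ => (6*y)^((1:ℝ)/3)) (2*(6*x)^(-(2:ℝ)/3)) x := by
    have := h6.rpow_const (p := (1:ℝ)/3) (Or.inl (by positivity))
    convert this using 1
    norm_num
  have h2 : HasDerivAt (fun y : ℝ => y ^ ((7:ℝ)/3)) ((7:ℝ)/3 * x^((4:ℝ)/3)) x := by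
    have := Real.hasDerivAt_rpow_const (x := x) (p := (7:ℝ)/3) (Or.inl hx.ne')
    convert this using 2
    norm_num
  have h := (h1.const_mul 2).add ((h2.const_mul ((10:ℝ)/3 * A)).mul_const c)
  refine h.congr_deriv ?_
  ring

private lemma sqrt_le_of_sq {x c : ℝ} (hc : 0 ≤ c) (h : x ≤ c^2) : Real.sqrt x ≤ c := by
  calc Real.sqrt x ≤ Real.sqrt (c^2) := Real.sqrt_le_sqrt h
  _ = c := Real.sqrt_sq hc

/-- `W_+` is a supersolution of the von Mises form of the rescaled Prandtl equation
on the region `ψ ≥ C_-·b̃^{-3/4}`. -/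
theorem Wplus_supersolution :
    ∀ eps : ℝ, eps ∈ Ioc (0:ℝ) (1/50) →
      ∃ Cbar : ℝ, 0 < Cbar ∧
        ∀ Cm : ℝ, Cbar ≤ Cm → ∀ A : ℝ, 0 < A →
          ∃ S0 : ℝ, 0 < S0 ∧
            ∀ s0 s1 : ℝ, S0 ≤ s0 → s0 < s1 →
              ∀ b btil : ℝ → ℝ,
                (∀ s ∈ Icc s0 s1, 0 < b s ∧ 0 < btil s) →
                (∀ s ∈ Icc s0 s1, HasDerivAt btil (-(b s * btil s)) s) →
                (∀ s ∈ Icc s0 s1, (1 - eps) / s ≤ b s ∧ b s ≤ (1 + eps) / s) →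
                (∀ s ∈ Icc s0 s1, (1 - 2 * eps) / s ≤ btil s ∧ btil s ≤ (1 + 2 * eps) / s) →
                ∀ s ∈ Icc s0 s1, ∀ psi : ℝ,
                  Cm * btil s ^ (-(3:ℝ)/4) ≤ psi →
                  deriv (fun σ => Wplus A btil σ psi) s
                    - 2 * b s * Wplus A btil s psi
                    + 3 * b s / 2 * psi * deriv (Wplus A btil s) psi
                    - Real.sqrt (Wplus A btil s psi)
                      * iteratedDeriv 2 (Wplus A btil s) psi
                    + 2 ≥ 0 := by
  intro eps heps
  refine ⟨100, by norm_num, ?_⟩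
  intro Cm hCm A hA
  refine ⟨26/25 * (280/9 * Real.sqrt A + 1)^4, by positivity, ?_⟩
  intro s0 s1 hS0s0 hs01 b btil hpos hderb hbb hbtb s hs psi hpsi
  obtain ⟨hbpos, hupos⟩ := hpos s hs
  have ha0 : (0:ℝ) ≤ Real.sqrt A := Real.sqrt_nonneg A
  have hCm0 : (0:ℝ) < Cm := lt_of_lt_of_le (by norm_num) hCm
  have hspos : 0 < s := lt_of_lt_of_le (by positivity) (le_trans hS0s0 hs.1)
  have hψpos : 0 < psi :=
    lt_of_lt_of_le (mul_pos hCm0 (Real.rpow_pos_of_pos hupos _)) hpsi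
  -- derivative in s
  have hd_s : deriv (fun σ => Wplus A btil σ psi) s
      = -(2 * A * b s * psi ^ ((10:ℝ)/3) * btil s ^ 2) := by
    have h2 : HasDerivAt (fun σ => btil σ ^ 2) (2 * btil s * -(b s * btil s)) s := by
      have := (hderb s hs).pow 2
      exact this.congr_deriv (by norm_num)
    have h4 : HasDerivAt (fun σ => Wplus A btil σ psi)
        (A * psi ^ ((10:ℝ)/3) * (2 * btil s * -(b s * btil s))) s :=
      (h2.const_mul (A * psi ^ ((10:ℝ)/3))).const_add ((6*psi)^((4:ℝ)/3)/4)
    rw [h4.deriv]; ring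
  -- derivative in psi
  have hd1 : deriv (Wplus A btil s) psi
      = 2*(6*psi)^((1:ℝ)/3) + 10/3 * A * psi^((7:ℝ)/3) * btil s ^ 2 :=
    (hasDerivAt_W1 A (btil s ^ 2) psi hψpos).deriv
  have hEv : deriv (Wplus A btil s)
      =ᶠ[𝓝 psi] (fun y => 2*(6*y)^((1:ℝ)/3) + 10/3 * A * y^((7:ℝ)/3) * btil s ^ 2) := by
    filter_upwards [Ioi_mem_nhds hψpos] with y hy
    exact (hasDerivAt_W1 A (btil s ^ 2) y hy).deriv
  have hd2 : iteratedDeriv 2 (Wplus A btil s) psi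
      = 4*(6*psi)^(-(2:ℝ)/3) + 70/9 * A * psi^((4:ℝ)/3) * btil s ^ 2 := by
    rw [iteratedDeriv_succ, iteratedDeriv_one, hEv.deriv_eq]
    exact (hasDerivAt_W2 A (btil s ^ 2) psi hψpos).deriv
  have hWval : Wplus A btil s psi
      = (6*psi)^((4:ℝ)/3)/4 + A * psi ^ ((10:ℝ)/3) * btil s ^ 2 := rfl
  rw [hd_s, hd1, hd2, hWval]
  -- power conversion facts
  have t6 : ∀ n : ℕ, ((6:ℝ) ^ ((1:ℝ)/3))^n = (6:ℝ)^((n:ℝ)/3) :=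
    fun n => third_pow 6 (by norm_num) n
  have tψ : ∀ n : ℕ, (psi ^ ((1:ℝ)/3))^n = psi ^ ((n:ℝ)/3) :=
    fun n => third_pow psi hψpos.le n
  have r4 : (6:ℝ)^((4:ℝ)/3) = ((6:ℝ)^((1:ℝ)/3))^4 := by
    have h := t6 4; norm_num at h; rw [h]
  have r2 : (6:ℝ)^((2:ℝ)/3) = ((6:ℝ)^((1:ℝ)/3))^2 := by
    have h := t6 2; norm_num at h; rw [h]
  have p4 : psi^((4:ℝ)/3) = (psi^((1:ℝ)/3))^4 := by
    have h := tψ 4; norm_num at h; rw [h]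
  have p2 : psi^((2:ℝ)/3) = (psi^((1:ℝ)/3))^2 := by
    have h := tψ 2; norm_num at h; rw [h]
  have p10 : psi^((10:ℝ)/3) = (psi^((1:ℝ)/3))^10 := by
    have h := tψ 10; norm_num at h; rw [h]
  have e1 : (6*psi) ^ ((4:ℝ)/3) = ((6:ℝ)^((1:ℝ)/3))^4 * (psi^((1:ℝ)/3))^4 := by
    rw [Real.mul_rpow (by norm_num) hψpos.le, r4, p4]
  have e3 : (6*psi) ^ ((1:ℝ)/3) = (6:ℝ)^((1:ℝ)/3) * psi^((1:ℝ)/3) :=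
    Real.mul_rpow (by norm_num) hψpos.le
  have e5 : (6*psi) ^ (-(2:ℝ)/3) = (((6:ℝ)^((1:ℝ)/3))^2 * (psi^((1:ℝ)/3))^2)⁻¹ := by
    rw [show -(2:ℝ)/3 = -((2:ℝ)/3) by norm_num,
      Real.rpow_neg (by positivity : (0:ℝ) ≤ 6*psi),
      Real.mul_rpow (by norm_num) hψpos.le, r2, p2]
  have hp1 : psi * psi^((1:ℝ)/3) = psi ^ ((4:ℝ)/3) := by
    rw [show (4:ℝ)/3 = 1 + (1:ℝ)/3 by norm_num, Real.rpow_add hψpos, Real.rpow_one]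
  have hp2 : psi * psi^((7:ℝ)/3) = psi ^ ((10:ℝ)/3) := by
    rw [show (10:ℝ)/3 = 1 + (7:ℝ)/3 by norm_num, Real.rpow_add hψpos, Real.rpow_one]
  have e34 : psi * (2*(6*psi)^((1:ℝ)/3) + 10/3 * A * psi^((7:ℝ)/3) * btil s ^ 2)
      = 2*((6:ℝ)^((1:ℝ)/3) * (psi^((1:ℝ)/3))^4)
        + 10/3 * A * (psi^((1:ℝ)/3))^10 * btil s ^ 2 := by
    rw [e3, ← p4, ← p10, ← hp1, ← hp2]; ring
  -- quantitative facts
  have ht : 0 < psi ^ ((1:ℝ)/3) := Real.rpow_pos_of_pos hψpos _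
  have hr : 0 < (6:ℝ) ^ ((1:ℝ)/3) := Real.rpow_pos_of_pos (by norm_num) _
  have hr3 : ((6:ℝ)^((1:ℝ)/3))^3 = 6 := by
    have h := t6 3; norm_num at h; exact h
  have hbs : 1 - eps ≤ b s * s := by
    have h := (hbb s hs).1; rw [div_le_iff₀ hspos] at h; linarith
  have hus : btil s * s ≤ 1 + 2*eps := by
    have h := (hbtb s hs).2; rw [le_div_iff₀ hspos] at h; exact h
  have hβu : btil s ≤ 2 * b s := by
    have h : btil s * s ≤ (2 * b s) * s := by linarith only [hbs, hus, heps.2]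
    exact (mul_le_mul_iff_of_pos_right hspos).mp h
  have hCm43 : 100 ≤ Cm ^ ((4:ℝ)/3) := by
    have h1 : Cm ^ ((1:ℝ)) ≤ Cm ^ ((4:ℝ)/3) :=
      Real.rpow_le_rpow_of_exponent_le (by linarith) (by norm_num)
    rw [Real.rpow_one] at h1; linarith
  have ht4ge : Cm ^ ((4:ℝ)/3) * (btil s)⁻¹ ≤ (psi^((1:ℝ)/3))^4 := by
    have h2 := Real.rpow_le_rpow (by positivity) hpsi (by norm_num : (0:ℝ) ≤ (4:ℝ)/3)
    rw [Real.mul_rpow hCm0.le (by positivity), ← Real.rpow_mul hupos.le] at h2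
    norm_num at h2
    rw [p4, Real.rpow_neg_one] at h2
    exact h2
  have hut : 100 ≤ btil s * (psi^((1:ℝ)/3))^4 := by
    have h3 : Cm ^ ((4:ℝ)/3) ≤ btil s * (psi^((1:ℝ)/3))^4 := by
      have := mul_le_mul_of_nonneg_left ht4ge hupos.le
      calc Cm ^ ((4:ℝ)/3) = btil s * (Cm ^ ((4:ℝ)/3) * (btil s)⁻¹) := by
            field_simp
        _ ≤ btil s * (psi^((1:ℝ)/3))^4 := this
    linarith
  have hu1 : btil s * s ≤ 26/25 := by linarith [heps.2]
  have hinv : 25/26*s ≤ (btil s)⁻¹ := by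
    rw [inv_eq_one_div, le_div_iff₀ hupos]; nlinarith
  have htlow : 280/9 * Real.sqrt A + 1 ≤ psi ^ ((1:ℝ)/3) := by
    have h1 : (1:ℝ) ≤ Cm ^ ((4:ℝ)/3) := by linarith
    have h2 : (btil s)⁻¹ ≤ Cm ^ ((4:ℝ)/3) * (btil s)⁻¹ :=
      le_mul_of_one_le_left (by positivity) h1
    have h3 : (280/9*Real.sqrt A + 1)^4 ≤ 25/26*s := by
      have h4 := le_trans hS0s0 hs.1
      nlinarith
    have h5 : (280/9*Real.sqrt A + 1)^4 ≤ (psi^((1:ℝ)/3))^4 := by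
      linarith [ht4ge]
    exact le_of_pow_le_pow_left₀ (by norm_num) ht.le h5
  have hA2 : A = Real.sqrt A ^ 2 := (Real.sq_sqrt hA.le).symm
  -- rewrite the goal
  rw [mul_assoc (3 * b s / 2) psi, e34, e1, p10, e5, p4, hA2]
  set r := (6:ℝ) ^ ((1:ℝ)/3) with hrdef
  set t := psi ^ ((1:ℝ)/3) with htdef
  set a := Real.sqrt A with hadef
  set u := btil s with hudef
  set β := b s with hβdef
  clear_value r t a u β
  clear hEv hd_s hd1 hd2 hWval hpsi t6 tψ r4 r2 p4 p2 p10 hp1 hp2 e1 e3 e5 e34 hus hu1 hinv ht4ge hbs hCm43 hA2 heps hs hS0s0 hs01 hA hCm hCm0 hspos hψpos hpos hderb hbb hbtb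
  clear htdef hrdef hadef hudef hβdef
  clear b btil s0 s1 s psi eps Cm A
  have hSnn : 0 ≤ Real.sqrt (r^4*t^4/4 + a^2*t^10*u^2) := Real.sqrt_nonneg _
  have hr6 : r^6 = 36 := by
    rw [show r^6 = (r^3)^2 by ring, hr3]; norm_num
  have hr4r : r^4 = 6*r := by linear_combination r * hr3
  have hrlt2 : r < 2 := by
    by_contra h
    push_neg at h
    have h8 : (2:ℝ)^3 ≤ r^3 := pow_le_pow_left₀ (by norm_num) h 3
    rw [hr3] at h8; norm_num at h8
  have hS1 : Real.sqrt (r^4*t^4/4 + a^2*t^10*u^2) ≤ r^2*t^2/2 + a^2*t^8*u^2*r^4/36 := by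
    apply sqrt_le_of_sq (by positivity)
    have hkey : (r^2*t^2/2 + a^2*t^8*u^2*r^4/36)^2
        = r^4*t^4/4 + a^2*t^10*u^2 + (a^2*t^8*u^2*r^4/36)^2 := by
      linear_combination (a^2*t^10*u^2/36) * hr6
    nlinarith [sq_nonneg (a^2*t^8*u^2*r^4/36)]
  have hS2 : Real.sqrt (r^4*t^4/4 + a^2*t^10*u^2) ≤ r^2*t^2/2 + a*t^5*u := by
    apply sqrt_le_of_sq
    · have h1 : 0 ≤ a*t^5*u := mul_nonneg (mul_nonneg ha0 (by positivity)) hupos.le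
      nlinarith [h1, sq_nonneg (r*t)]
    · have h1 : 0 ≤ a*r^2*t^7*u :=
        mul_nonneg (mul_nonneg (mul_nonneg ha0 (by positivity)) (by positivity)) hupos.le
      nlinarith [h1]
  have hX : Real.sqrt (r^4*t^4/4 + a^2*t^10*u^2) * (4*(r^2*t^2)⁻¹)
      ≤ 2 + r^2/9*a^2*t^6*u^2 := by
    have h := mul_le_mul_of_nonneg_right hS1
      (show (0:ℝ) ≤ 4*(r^2*t^2)⁻¹ by positivity)
    have heq : (r^2*t^2/2 + a^2*t^8*u^2*r^4/36) * (4*(r^2*t^2)⁻¹)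
        = 2 + r^2/9*a^2*t^6*u^2 := by
      rw [hr4r]; field_simp
      linear_combination (-72*t^6*a^2*u^2) * hr3
    rw [heq] at h; exact h
  have hY : Real.sqrt (r^4*t^4/4 + a^2*t^10*u^2) * (70/9*a^2*t^4*u^2)
      ≤ 35/9*r^2*a^2*t^6*u^2 + 70/9*a^3*t^9*u^3 := by
    have h := mul_le_mul_of_nonneg_right hS2
      (show (0:ℝ) ≤ 70/9*a^2*t^4*u^2 by positivity)
    have heq : (r^2*t^2/2 + a*t^5*u) * (70/9*a^2*t^4*u^2)
        = 35/9*r^2*a^2*t^6*u^2 + 70/9*a^3*t^9*u^3 := by ring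
    rw [heq] at h; exact h
  have hmain : 4*r^2*a^2*t^6*u^2 + 70/9*a^3*t^9*u^3 ≤ β*a^2*t^10*u^2 := by
    have K1 : 4*r^2*(a^2*t^6*u^2) ≤ (u*t^4/4)*(a^2*t^6*u^2) := by
      apply mul_le_mul_of_nonneg_right _ (by positivity)
      nlinarith [hut, hrlt2, hr]
    have K2 : 70/9*a*(a^2*t^9*u^3) ≤ (t/4)*(a^2*t^9*u^3) := by
      apply mul_le_mul_of_nonneg_right _ (by positivity : (0:ℝ) ≤ a^2*t^9*u^3)
      linarith [htlow, ha0]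
    have K3 : u*(a^2*t^10*u^2/2) ≤ 2*β*(a^2*t^10*u^2/2) :=
      mul_le_mul_of_nonneg_right hβu (by positivity)
    nlinarith [K1, K2, K3]
  have hexpand : Real.sqrt (r^4*t^4/4 + a^2*t^10*u^2)
        * (4*(r^2*t^2)⁻¹ + 70/9*a^2*t^4*u^2)
      = Real.sqrt (r^4*t^4/4 + a^2*t^10*u^2) * (4*(r^2*t^2)⁻¹)
        + Real.sqrt (r^4*t^4/4 + a^2*t^10*u^2) * (70/9*a^2*t^4*u^2) := by ring
  rw [hexpand]
  have hr4b : β*t^4*r^4 = 6*(β*t^4*r) := by linear_combination (β*t^4*r) * hr3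
  nlinarith [hX, hY, hmain, hr4b]
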